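/- For λ ≠ 0, the transformation Φ(x,y,u,p,q) = (−λ(x + 1/p), −(y + 1/(λq)), −u + ln(−p) + (1/λ)ln(−q), p/λ, q) is a contact transformation of the contact structure ker(du − p dx − q dy) on (an open subset of) C^5 that interchanges the two distributions E and V of the ILC structure given by u_{11} = p², u_{12} = 0, u_{22} = λq²; i.e. Φ pulls back du − p dx − q dy to a nonzero multiple of itself, maps V = span{∂_p, ∂_q} onto E = span{∂_x + p∂_u + p²∂_p, ∂_y + q∂_u + λq²∂_q}, and maps E onto V. Hence the ILC structure S_λ is self-dual. -/

import Mathlib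

-- Coordinates on ℂ^5: (x, y, u, p, q) = (z 0, z 1, z 2, z 3, z 4).

/-- `D_1 = ∂_x + p∂_u + p²∂_p` for the system `u₁₁ = p², u₁₂ = 0, u₂₂ = λq²`. -/
noncomputable def D1 : (Fin 5 → ℂ) → Fin 5 → ℂ :=
  fun z => ![1, 0, z 3, (z 3) ^ 2, 0]

/-- `D_2 = ∂_y + q∂_u + λq²∂_q`. -/
noncomputable def D2 (lam : ℂ) : (Fin 5 → ℂ) → Fin 5 → ℂ :=
  fun z => ![0, 1, z 4, 0, lam * (z 4) ^ 2]

/-- The contact form `du − p dx − q dy` at `z`, evaluated on the tangent vector `v`. -/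
noncomputable def ctForm (z v : Fin 5 → ℂ) : ℂ := v 2 - z 3 * v 0 - z 4 * v 1

/-- The self-duality map
`Φ(x,y,u,p,q) = (−λ(x+1/p), −(y+1/(λq)), −u + ln(−p) + (1/λ)ln(−q), p/λ, q)`. -/
noncomputable def PhiSD (lam : ℂ) : (Fin 5 → ℂ) → Fin 5 → ℂ :=
  fun z => ![-lam * (z 0 + 1 / z 3), -(z 1 + 1 / (lam * z 4)),
    -z 2 + Complex.log (-z 3) + (1 / lam) * Complex.log (-z 4), z 3 / lam, z 4]

noncomputable abbrev pr5 (i : Fin 5) : (Fin 5 → ℂ) →L[ℂ] ℂ :=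
  ContinuousLinearMap.proj i

noncomputable def LSD (lam p q : ℂ) : (Fin 5 → ℂ) →L[ℂ] (Fin 5 → ℂ) :=
  ContinuousLinearMap.pi
    ![(-lam) • pr5 0 + (lam / p ^ 2) • pr5 3,
      (-1 : ℂ) • pr5 1 + (1 / (lam * q ^ 2)) • pr5 4,
      (-1 : ℂ) • pr5 2 + p⁻¹ • pr5 3 + (1 / (lam * q)) • pr5 4,
      lam⁻¹ • pr5 3,
      pr5 4]


lemma LSD_apply (lam p q : ℂ) (v : Fin 5 → ℂ) :
    LSD lam p q v = ![-lam * v 0 + lam / p ^ 2 * v 3,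
      -v 1 + 1 / (lam * q ^ 2) * v 4,
      -v 2 + p⁻¹ * v 3 + 1 / (lam * q) * v 4,
      lam⁻¹ * v 3, v 4] := by
  funext i
  fin_cases i <;> simp [LSD, pr5]


set_option maxHeartbeats 1000000 in
lemma hasFDerivAt_PhiSD (lam : ℂ) (hlam : lam ≠ 0) (z : Fin 5 → ℂ)
    (hp : -z 3 ∈ Complex.slitPlane) (hq : -z 4 ∈ Complex.slitPlane) :
    HasFDerivAt (PhiSD lam) (LSD lam (z 3) (z 4)) z := by
  have hp0 : z 3 ≠ 0 := fun h => Complex.slitPlane_ne_zero hp (by simp [h])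
  have hq0 : z 4 ≠ 0 := fun h => Complex.slitPlane_ne_zero hq (by simp [h])
  apply hasFDerivAt_pi''
  intro i
  fin_cases i
  · have h3inv : HasFDerivAt (fun z : Fin 5 → ℂ => (z 3)⁻¹)
        ((-(z 3 ^ 2)⁻¹) • pr5 3) z :=
      (hasDerivAt_inv hp0).comp_hasFDerivAt z (hasFDerivAt_apply 3 z)
    have h0 := ((hasFDerivAt_apply 0 z).add h3inv).const_mul (-lam)
    have : HasFDerivAt (fun z : Fin 5 → ℂ => PhiSD lam z 0)
        ((-lam) • (pr5 0 + (-(z 3 ^ 2)⁻¹) • pr5 3)) z := by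
      simpa [PhiSD, one_div, neg_mul] using h0
    refine this.congr_fderiv ?_
    refine ContinuousLinearMap.ext fun v => ?_
    simp [LSD, pr5]
    ring
  · have h4inv : HasFDerivAt (fun z : Fin 5 → ℂ => (lam * z 4)⁻¹)
        ((-((lam * z 4) ^ 2)⁻¹) • (lam • pr5 4)) z :=
      (hasDerivAt_inv (mul_ne_zero hlam hq0)).comp_hasFDerivAt z
        ((hasFDerivAt_apply 4 z).const_mul lam)
    have h1 := ((hasFDerivAt_apply 1 z).add h4inv).neg
    have : HasFDerivAt (fun z : Fin 5 → ℂ => PhiSD lam z 1)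
        (-(pr5 1 + (-((lam * z 4) ^ 2)⁻¹) • (lam • pr5 4))) z := by
      have e : (fun z : Fin 5 → ℂ => PhiSD lam z 1) = fun z => -(z 1 + (lam * z 4)⁻¹) := by
        funext w; simp [PhiSD, one_div]
      rw [e]; exact h1
    refine this.congr_fderiv ?_
    refine ContinuousLinearMap.ext fun v => ?_
    simp [LSD, pr5]
    field_simp
    ring
  · have hneg3 : HasFDerivAt (fun z : Fin 5 → ℂ => -z 3) (-pr5 3) z :=
      (hasFDerivAt_apply 3 z).neg
    have hneg4 : HasFDerivAt (fun z : Fin 5 → ℂ => -z 4) (-pr5 4) z :=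
      (hasFDerivAt_apply 4 z).neg
    have hlog3 : HasFDerivAt (fun z : Fin 5 → ℂ => Complex.log (-z 3))
        ((-z 3)⁻¹ • (-pr5 3)) z :=
      by have := (Complex.hasDerivAt_log hp).comp_hasFDerivAt z hneg3; exact this
    have hlog4 : HasFDerivAt (fun z : Fin 5 → ℂ => Complex.log (-z 4))
        ((-z 4)⁻¹ • (-pr5 4)) z :=
      by have := (Complex.hasDerivAt_log hq).comp_hasFDerivAt z hneg4; exact this
    have h2 := (((hasFDerivAt_apply 2 z).neg).add hlog3).add (hlog4.const_mul (1 / lam))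
    have : HasFDerivAt (fun z : Fin 5 → ℂ => PhiSD lam z 2)
        ((-pr5 2 + (-z 3)⁻¹ • (-pr5 3)) + (1 / lam) • ((-z 4)⁻¹ • (-pr5 4))) z := by
      have e : (fun z : Fin 5 → ℂ => PhiSD lam z 2)
          = fun z => -z 2 + Complex.log (-z 3) + 1 / lam * Complex.log (-z 4) := by
        funext w; simp [PhiSD]
      rw [e]; exact h2
    refine this.congr_fderiv ?_
    refine ContinuousLinearMap.ext fun v => ?_
    simp [LSD, pr5]
    field_simp
  · have h3 := HasFDerivAt.const_mul (𝕜 := ℂ) (hasFDerivAt_apply 3 z) lam⁻¹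
    have : HasFDerivAt (fun z : Fin 5 → ℂ => PhiSD lam z 3) (lam⁻¹ • pr5 3) z := by
      simpa [PhiSD, div_eq_mul_inv, mul_comm] using h3
    refine this.congr_fderiv ?_
    refine ContinuousLinearMap.ext fun v => ?_
    simp [LSD, pr5]
  · have : HasFDerivAt (fun z : Fin 5 → ℂ => PhiSD lam z 4) (pr5 4) z := by
      simpa [PhiSD] using hasFDerivAt_apply 4 z
    refine this.congr_fderiv ?_
    refine ContinuousLinearMap.ext fun v => ?_
    simp [LSD, pr5]


lemma span_pair_smul {c d : ℂ} (hc : c ≠ 0) (hd : d ≠ 0) (a b : Fin 5 → ℂ) :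
    Submodule.span ℂ {c • a, d • b} = Submodule.span ℂ {a, b} := by
  have ha : a ∈ Submodule.span ℂ ({c • a, d • b} : Set (Fin 5 → ℂ)) := by
    have := Submodule.smul_mem (Submodule.span ℂ ({c • a, d • b} : Set (Fin 5 → ℂ))) c⁻¹
      (Submodule.subset_span (Set.mem_insert _ _))
    simpa [smul_smul, inv_mul_cancel₀ hc] using this
  have hb : b ∈ Submodule.span ℂ ({c • a, d • b} : Set (Fin 5 → ℂ)) := by
    have := Submodule.smul_mem (Submodule.span ℂ ({c • a, d • b} : Set (Fin 5 → ℂ))) d⁻¹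
      (Submodule.subset_span (show d • b ∈ ({c • a, d • b} : Set (Fin 5 → ℂ)) by simp))
    simpa [smul_smul, inv_mul_cancel₀ hd] using this
  apply le_antisymm
  · rw [Submodule.span_le]
    rintro x hx
    simp only [Set.mem_insert_iff, Set.mem_singleton_iff] at hx
    rcases hx with rfl | rfl
    · exact Submodule.smul_mem _ c (Submodule.subset_span (by simp))
    · exact Submodule.smul_mem _ d (Submodule.subset_span (by simp))
  · rw [Submodule.span_le]
    rintro x hx
    simp only [Set.mem_insert_iff, Set.mem_singleton_iff] at hx
    rcases hx with rfl | rfl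
    · exact ha
    · exact hb

set_option maxHeartbeats 1000000 in
/-- **Self-duality of the model D.7 (`λ ≠ 0`):** on the open set where `−p` and `−q` lie
in the slit plane, `Φ` is a contact transformation (it pulls back the contact form to a
nonzero multiple of itself) whose differential maps `V = span{∂_p, ∂_q}` onto
`E = span{D₁, D₂}` and `E` onto `V`.  Hence the ILC structure `S_λ` is self-dual. -/
theorem D7_self_dual (lam : ℂ) (hlam : lam ≠ 0) :
    ∀ z : Fin 5 → ℂ, -z 3 ∈ Complex.slitPlane → -z 4 ∈ Complex.slitPlane →
      (∃ c : ℂ, c ≠ 0 ∧ ∀ v : Fin 5 → ℂ,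
        ctForm (PhiSD lam z) (fderiv ℂ (PhiSD lam) z v) = c * ctForm z v) ∧
      Submodule.map (fderiv ℂ (PhiSD lam) z : (Fin 5 → ℂ) →ₗ[ℂ] Fin 5 → ℂ)
          (Submodule.span ℂ {(Pi.single 3 1 : Fin 5 → ℂ), Pi.single 4 1})
        = Submodule.span ℂ {D1 (PhiSD lam z), D2 lam (PhiSD lam z)} ∧
      Submodule.map (fderiv ℂ (PhiSD lam) z : (Fin 5 → ℂ) →ₗ[ℂ] Fin 5 → ℂ) (Submodule.span ℂ {D1 z, D2 lam z})
        = Submodule.span ℂ {(Pi.single 3 1 : Fin 5 → ℂ), Pi.single 4 1} := by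
  intro z hp hq
  have hp0 : z 3 ≠ 0 := fun h => Complex.slitPlane_ne_zero hp (by simp [h])
  have hq0 : z 4 ≠ 0 := fun h => Complex.slitPlane_ne_zero hq (by simp [h])
  have hF : fderiv ℂ (PhiSD lam) z = LSD lam (z 3) (z 4) :=
    (hasFDerivAt_PhiSD lam hlam z hp hq).fderiv
  rw [hF]
  refine ⟨⟨-1, by norm_num, fun v => ?_⟩, ?_, ?_⟩
  · simp only [ctForm, LSD_apply, PhiSD]
    simp only [Matrix.cons_val_zero, Matrix.cons_val_one, Matrix.head_cons,
      Matrix.cons_val_two, Matrix.tail_cons, Matrix.cons_val_three, Matrix.cons_val_four]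
    simp only [one_div, div_eq_mul_inv, mul_inv, ← inv_pow]
    have h1 : z 3 * (z 3)⁻¹ = 1 := mul_inv_cancel₀ hp0
    have h2 : z 4 * (z 4)⁻¹ = 1 := mul_inv_cancel₀ hq0
    have h3 : lam * lam⁻¹ = 1 := mul_inv_cancel₀ hlam
    generalize (z 3)⁻¹ = P at *
    generalize (z 4)⁻¹ = Q at *
    generalize lam⁻¹ = L at *
    linear_combination (z 3 * v 0 - P * v 3) * h3 + (-P * v 3 * lam * L) * h1
      + (-L * Q * v 4) * h2
  · rw [Submodule.map_span, Set.image_insert_eq, Set.image_singleton]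
    have e1 : LSD lam (z 3) (z 4) (Pi.single 3 1) = (lam / (z 3) ^ 2) • D1 (PhiSD lam z) := by
      funext i; fin_cases i <;>
        simp [LSD_apply, D1, PhiSD, Pi.single_apply] <;> field_simp [hp0, hq0, hlam] <;> ring
    have e2 : LSD lam (z 3) (z 4) (Pi.single 4 1)
        = (1 / (lam * (z 4) ^ 2)) • D2 lam (PhiSD lam z) := by
      funext i; fin_cases i <;>
        simp [LSD_apply, D2, PhiSD, Pi.single_apply] <;> field_simp [hp0, hq0, hlam] <;> ring
    rw [ContinuousLinearMap.coe_coe, e1, e2]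
    exact span_pair_smul (div_ne_zero hlam (pow_ne_zero 2 hp0))
      (one_div_ne_zero (mul_ne_zero hlam (pow_ne_zero 2 hq0))) _ _
  · rw [Submodule.map_span, Set.image_insert_eq, Set.image_singleton]
    have e1 : LSD lam (z 3) (z 4) (D1 z) = ((z 3) ^ 2 / lam) • (Pi.single 3 1 : Fin 5 → ℂ) := by
      funext i; fin_cases i <;>
        simp [LSD_apply, D1, Pi.single_apply] <;> field_simp [hp0, hq0, hlam] <;> ring
    have e2 : LSD lam (z 3) (z 4) (D2 lam z)
        = (lam * (z 4) ^ 2) • (Pi.single 4 1 : Fin 5 → ℂ) := by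
      funext i; fin_cases i <;>
        simp [LSD_apply, D2, Pi.single_apply] <;> field_simp [hp0, hq0, hlam] <;> ring
    rw [ContinuousLinearMap.coe_coe, e1, e2]
    exact span_pair_smul (div_ne_zero (pow_ne_zero 2 hp0) hlam)
      (mul_ne_zero hlam (pow_ne_zero 2 hq0)) _ _
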